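/- If an integer l ≥ 0 satisfies l > γ, then s_l ≥ −1. (This is the arithmetic content of Proposition 3.3: for l > γ the relevant first cohomology vanishes, i.e. s_l ≥ −1; in particular the polynomial P_{H^1}(t) = Σ_{l≥0} max(0, −s_l−1) t^l has degree at most max(0, γ).) -/
import Mathlib


open scoped BigOperators

/-- `s_l := l·b₀ − Σ_i ⌈l·ω_i/α_i⌉`. -/
noncomputable def sVal (ν : ℕ) (b0 : ℤ) (α ω : Fin ν → ℤ) (l : ℤ) : ℤ :=
  l * b0 - ∑ i, ⌈((l * ω i : ℤ) : ℚ) / (α i : ℚ)⌉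

/-- If an integer `l ≥ 0` satisfies `l > γ`, then `s_l ≥ −1`. -/
theorem stmt0 (ν : ℕ) (hν : 3 ≤ ν) (b0 : ℤ) (α ω : Fin ν → ℤ)
    (hω : ∀ i, 0 < ω i) (hωα : ∀ i, ω i < α i) (hcop : ∀ i, Int.gcd (α i) (ω i) = 1)
    (e : ℚ) (he : e = -(b0 : ℚ) + ∑ i, (ω i : ℚ) / (α i : ℚ)) (hneg : e < 0)
    (γ : ℚ) (hγ : γ = ((ν : ℚ) - 2 - ∑ i, 1 / (α i : ℚ)) / |e|)
    (l : ℤ) (hl0 : 0 ≤ l) (hl : (l : ℚ) > γ) :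
    sVal ν b0 α ω l ≥ -1 := by
  have hα : ∀ i, 0 < α i := fun i => (hω i).trans (hωα i)
  have hαQ : ∀ i, (0:ℚ) < (α i : ℚ) := fun i => by exact_mod_cast hα i
  -- ceiling bound
  have hceil : ∀ i, (⌈((l * ω i : ℤ) : ℚ) / (α i : ℚ)⌉ : ℚ)
      ≤ ((l * ω i : ℤ) : ℚ) / (α i : ℚ) + 1 - 1 / (α i : ℚ) := by
    intro i
    set c : ℤ := ⌈((l * ω i : ℤ) : ℚ) / (α i : ℚ)⌉ with hc
    have h1 : (c:ℚ) < ((l * ω i : ℤ) : ℚ) / (α i : ℚ) + 1 := Int.ceil_lt_add_one _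
    have h2 : (c:ℚ) * (α i : ℚ) < ((l * ω i : ℤ) : ℚ) + (α i : ℚ) := by
      have := mul_lt_mul_of_pos_right h1 (hαQ i)
      rw [add_mul, div_mul_cancel₀ _ (ne_of_gt (hαQ i)), one_mul] at this
      exact this
    have h3 : c * α i < l * ω i + α i := by exact_mod_cast h2
    have h4 : c * α i ≤ l * ω i + α i - 1 := by omega
    have h5 : (c:ℚ) * (α i : ℚ) ≤ ((l * ω i : ℤ) : ℚ) + (α i : ℚ) - 1 := by
      exact_mod_cast h4
    have h6 : (c:ℚ) ≤ (((l * ω i : ℤ) : ℚ) + (α i : ℚ) - 1) / (α i : ℚ) :=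
      (le_div_iff₀ (hαQ i)).2 h5
    have h7 : (((l * ω i : ℤ) : ℚ) + (α i : ℚ) - 1) / (α i : ℚ)
        = ((l * ω i : ℤ) : ℚ) / (α i : ℚ) + 1 - 1 / (α i : ℚ) := by
      rw [sub_div, add_div, div_self (ne_of_gt (hαQ i))]
    linarith [h6, h7.le, h7.ge]
  have hsum : (∑ i, (⌈((l * ω i : ℤ) : ℚ) / (α i : ℚ)⌉ : ℚ))
      ≤ ∑ i, (((l * ω i : ℤ) : ℚ) / (α i : ℚ) + 1 - 1 / (α i : ℚ)) :=
    Finset.sum_le_sum fun i _ => hceil i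
  have hsplit : ∑ i, (((l * ω i : ℤ) : ℚ) / (α i : ℚ) + 1 - 1 / (α i : ℚ))
      = (l:ℚ) * (∑ i, (ω i : ℚ) / (α i : ℚ)) + (ν:ℚ) - ∑ i, 1 / (α i : ℚ) := by
    rw [Finset.sum_sub_distrib, Finset.sum_add_distrib, Finset.mul_sum]
    simp [mul_div_assoc]
  -- from hl
  have hne : -e > 0 := by linarith
  have habs : |e| = -e := abs_of_neg hneg
  have hlγ : ((ν : ℚ) - 2 - ∑ i, 1 / (α i : ℚ)) < (l:ℚ) * (-e) := by
    rw [hγ, habs] at hl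
    exact (div_lt_iff₀ hne).1 hl
  -- final
  have key : ((sVal ν b0 α ω l : ℤ) : ℚ) > -2 := by
    have hcast : ((sVal ν b0 α ω l : ℤ) : ℚ)
        = (l:ℚ) * (b0:ℚ) - ∑ i, (⌈((l * ω i : ℤ) : ℚ) / (α i : ℚ)⌉ : ℚ) := by
      unfold sVal; push_cast; ring
    rw [hcast]
    have he' : (l:ℚ) * (-e) = (l:ℚ) * (b0:ℚ) - (l:ℚ) * ∑ i, (ω i : ℚ) / (α i : ℚ) := by
      rw [he]; ring
    rw [hsplit] at hsum
    linarith
  have : (-2 : ℤ) < sVal ν b0 α ω l := by exact_mod_cast key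
  omega
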